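/- Let p > 1, 1 ≤ q ≤ p, β > 0, and g : (0,1] → [0,∞) be non-increasing with ∫₀¹ g(u) du = f. Then ∫₀¹ ((1/t)∫₀ᵗ g(u) du)^p dt ≤ −(q(β+1)/((p−1)qβ+(p−q)))·f^p + (p(β+1)^q/((p−1)qβ+(p−q)))·∫₀¹ ((1/t)∫₀ᵗ g(u) du)^(p−q) g(t)^q dt. -/

import Mathlib

open MeasureTheory Set Filter Topology

lemma young_pt {p q β h c : ℝ} (hq : 1 ≤ q) (hβ : 0 < β) (hc0 : 0 ≤ c) (hch : c ≤ h) :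
    h ^ (p - 1) * c ≤
      (q - 1) / (q * (β + 1)) * h ^ p + (β + 1) ^ (q - 1) / q * (h ^ (p - q) * c ^ q) := by
  have hq0 : 0 < q := lt_of_lt_of_le one_pos hq
  have hβ1 : (0:ℝ) < β + 1 := by linarith
  have hh0 : 0 ≤ h := hc0.trans hch
  rcases eq_or_lt_of_le hc0 with hc | hc
  · rw [← hc]
    have h1 : h ^ (p-1) * 0 = 0 := by ring
    have h2 : (0:ℝ) ^ q = 0 := Real.zero_rpow hq0.ne'
    rw [h1, h2]
    have h3 : 0 ≤ (q - 1) / (q * (β + 1)) * h ^ p :=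
      mul_nonneg (div_nonneg (by linarith) (by positivity)) (Real.rpow_nonneg hh0 p)
    have h4 : (0:ℝ) ≤ (β + 1) ^ (q - 1) / q := by positivity
    nlinarith
  · have hh : 0 < h := lt_of_lt_of_le hc hch
    set w₁ := (q - 1) / q with hw₁
    set w₂ := 1 / q with hw₂
    have hsum : w₁ + w₂ = 1 := by rw [hw₁, hw₂]; field_simp; ring
    have hw₁0 : 0 ≤ w₁ := div_nonneg (by linarith) hq0.le
    have hw₂0 : 0 ≤ w₂ := by positivity
    have key := Real.geom_mean_le_arith_mean2_weighted (w₁ := w₁) (w₂ := w₂)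
      (p₁ := (β + 1)⁻¹ * h ^ p) (p₂ := (β + 1) ^ (q - 1) * (h ^ (p - q) * c ^ q))
      hw₁0 hw₂0 (by positivity) (by positivity) hsum
    have e1 : -w₁ + (q-1)*w₂ = 0 := by rw [hw₁, hw₂]; field_simp; ring
    have e2 : p*w₁ + (p-q)*w₂ = p-1 := by rw [hw₁, hw₂]; field_simp; ring
    have e3 : q*w₂ = 1 := by rw [hw₂]; field_simp
    have lhs_eq : ((β + 1)⁻¹ * h ^ p) ^ w₁ * ((β + 1) ^ (q - 1) * (h ^ (p - q) * c ^ q)) ^ w₂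
        = h ^ (p - 1) * c := by
      rw [Real.mul_rpow (by positivity) (Real.rpow_nonneg hh0 p),
        Real.mul_rpow (by positivity) (by positivity),
        Real.mul_rpow (Real.rpow_nonneg hh0 _) (Real.rpow_nonneg hc0 q),
        Real.inv_rpow hβ1.le, ← Real.rpow_neg hβ1.le,
        ← Real.rpow_mul hβ1.le, ← Real.rpow_mul hh0, ← Real.rpow_mul hh0, ← Real.rpow_mul hc0]
      calc (β+1)^(-w₁) * h^(p*w₁) * ((β+1)^((q-1)*w₂) * (h^((p-q)*w₂) * c^(q*w₂)))
          = ((β+1)^(-w₁) * (β+1)^((q-1)*w₂)) * (h^(p*w₁) * h^((p-q)*w₂) * c^(q*w₂)) := by ring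
        _ = (β+1)^(-w₁+(q-1)*w₂) * (h^(p*w₁+(p-q)*w₂) * c^(q*w₂)) := by
            rw [Real.rpow_add hβ1, Real.rpow_add hh]
        _ = h^(p-1) * c := by rw [e1, e2, e3, Real.rpow_zero, Real.rpow_one, one_mul]
    rw [← lhs_eq]
    refine key.trans (le_of_eq ?_)
    rw [hw₁, hw₂]; field_simp

lemma F_hasDeriv {g : ℝ → ℝ} (hmono : AntitoneOn g (Ioc 0 1))
    (hgint : IntegrableOn g (Ioc 0 1)) {t : ℝ} (ht : t ∈ Ioo (0:ℝ) 1) :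
    HasDerivWithinAt (fun x => ∫ u in Ioc (0:ℝ) x, g u) (sSup (g '' Ioo t 1)) (Ioi t) t := by
  set F := fun x => ∫ u in Ioc (0:ℝ) x, g u with hF
  set L := sSup (g '' Ioo t 1) with hL
  have htI : t ∈ Ioc (0:ℝ) 1 := ⟨ht.1, ht.2.le⟩
  have hsub : Ioo t 1 ⊆ Ioc 0 1 := fun u hu => ⟨ht.1.trans hu.1, hu.2.le⟩
  have hne : (Ioo t 1).Nonempty := nonempty_Ioo.2 ht.2
  have hbdd : BddAbove (g '' Ioo t 1) := by
    refine ⟨g t, fun y hy => ?_⟩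
    obtain ⟨u, hu, rfl⟩ := hy
    exact hmono htI (hsub hu) hu.1.le
  have htend : Tendsto g (𝓝[>] t) (𝓝 L) :=
    AntitoneOn.tendsto_nhdsWithin_Ioo_right hne (hmono.mono hsub) hbdd
  rw [hasDerivWithinAt_iff_tendsto_slope]
  have hIoi : Ioi t \ {t} = Ioi t := diff_singleton_eq_self (fun h => lt_irrefl t h)
  rw [hIoi]
  have hmem : Ioo t 1 ∈ 𝓝[>] t := Ioo_mem_nhdsGT ht.2
  have key : ∀ y ∈ Ioo t 1, g y ≤ slope F t y ∧ slope F t y ≤ L := by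
    intro y hy
    have hyt : t < y := hy.1
    have hsub2 : Ioc t y ⊆ Ioc 0 1 := fun u hu => ⟨ht.1.trans hu.1, hu.2.trans hy.2.le⟩
    have hint2 : IntegrableOn g (Ioc t y) := hgint.mono_set hsub2
    have hFdiff : F y - F t = ∫ u in Ioc t y, g u := by
      have hun : Ioc (0:ℝ) t ∪ Ioc t y = Ioc 0 y := Ioc_union_Ioc_eq_Ioc ht.1.le hyt.le
      have hdis : Disjoint (Ioc (0:ℝ) t) (Ioc t y) := by
        simp [Set.disjoint_left]
        intro u hu1 hu2
        exact fun h => absurd h (not_lt.2 hu2)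
      have : F y = F t + ∫ u in Ioc t y, g u := by
        rw [hF]
        simp only
        rw [← hun, setIntegral_union hdis measurableSet_Ioc
          (hgint.mono_set (fun u hu => ⟨hu.1, hu.2.trans ht.2.le⟩)) hint2]
      linarith
    have hlow : (y - t) * g y ≤ ∫ u in Ioc t y, g u := by
      have hconst : ∫ _ in Ioc t y, g y = (y - t) * g y := by
        simp [Real.volume_Ioc, ENNReal.toReal_ofReal (by linarith : (0:ℝ) ≤ y - t), hyt.le]
      rw [← hconst]
      refine setIntegral_mono_on (integrableOn_const (ne_of_lt ?_)) hint2 measurableSet_Ioc ?_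
      · rw [Real.volume_Ioc]; exact ENNReal.ofReal_lt_top
      · intro u hu
        exact hmono (hsub2 hu) ⟨ht.1.trans hy.1, hy.2.le⟩ hu.2
    have hup : (∫ u in Ioc t y, g u) ≤ (y - t) * L := by
      have hconst : ∫ _ in Ioc t y, L = (y - t) * L := by
        simp [Real.volume_Ioc, ENNReal.toReal_ofReal (by linarith : (0:ℝ) ≤ y - t), hyt.le]
      rw [← hconst]
      refine setIntegral_mono_on hint2 (integrableOn_const (ne_of_lt ?_)) measurableSet_Ioc ?_
      · rw [Real.volume_Ioc]; exact ENNReal.ofReal_lt_top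
      · intro u hu
        exact le_csSup hbdd ⟨u, ⟨hu.1, lt_of_le_of_lt hu.2 hy.2⟩, rfl⟩
    have hslope : slope F t y = (∫ u in Ioc t y, g u) / (y - t) := by
      rw [slope_def_field, hFdiff]
    constructor
    · rw [hslope, le_div_iff₀ (by linarith : (0:ℝ) < y - t)]
      linarith
    · rw [hslope, div_le_iff₀ (by linarith : (0:ℝ) < y - t)]
      linarith
  refine tendsto_of_tendsto_of_tendsto_of_le_of_le' htend tendsto_const_nhds ?_ ?_
  · filter_upwards [hmem] with y hy
    exact (key y hy).1
  · filter_upwards [hmem] with y hy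
    exact (key y hy).2

set_option maxHeartbeats 2000000 in
/-- Hardy-type inequality (Corollary 2): for `p > 1`, `1 ≤ q ≤ p`, `β > 0`, and
`g : (0,1] → [0,∞)` non-increasing with `∫₀¹ g = f` and `g ∈ L^p(0,1)`:
`∫₀¹ ((1/t)∫₀ᵗ g)^p dt ≤ −(q(β+1)/((p−1)qβ+(p−q)))f^p
  + (p(β+1)^q/((p−1)qβ+(p−q)))∫₀¹ ((1/t)∫₀ᵗ g)^(p−q) g(t)^q dt`. -/
theorem stmt10 (p q β f : ℝ) (g : ℝ → ℝ) (hp : 1 < p) (hq1 : 1 ≤ q) (hqp : q ≤ p)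
    (hβ : 0 < β) (hg0 : ∀ t ∈ Set.Ioc (0 : ℝ) 1, 0 ≤ g t)
    (hmono : AntitoneOn g (Set.Ioc 0 1))
    (hgp : IntegrableOn (fun t => g t ^ p) (Set.Ioc 0 1))
    (hf : (∫ u in Set.Ioc (0 : ℝ) 1, g u) = f) :
    (∫ t in Set.Ioc (0 : ℝ) 1, ((1 / t) * ∫ u in Set.Ioc (0 : ℝ) t, g u) ^ p) ≤
      -(q * (β + 1) / ((p - 1) * q * β + (p - q))) * f ^ p +
        (p * (β + 1) ^ q / ((p - 1) * q * β + (p - q))) *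
          ∫ t in Set.Ioc (0 : ℝ) 1,
            ((1 / t) * ∫ u in Set.Ioc (0 : ℝ) t, g u) ^ (p - q) * g t ^ q := by
  have hp0 : (0:ℝ) < p := by linarith
  have hq0 : (0:ℝ) < q := by linarith
  have hp1 : (0:ℝ) < p - 1 := by linarith
  set S := Set.Ioc (0:ℝ) 1 with hSdef
  set F : ℝ → ℝ := fun t => ∫ u in Set.Ioc (0:ℝ) t, g u with hFdef
  set H : ℝ → ℝ := fun t => (1/t) * F t with hHdef
  -- measurability of g
  have hgae : AEStronglyMeasurable g (volume.restrict S) := by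
    have h1 : AEMeasurable (fun t => (g t ^ p) ^ p⁻¹) (volume.restrict S) :=
      (Real.continuous_rpow_const (by positivity)).measurable.comp_aemeasurable
        hgp.1.aemeasurable
    refine (h1.congr ?_).aestronglyMeasurable
    filter_upwards [ae_restrict_mem measurableSet_Ioc] with t ht
    exact Real.rpow_rpow_inv (hg0 t ht) hp0.ne'
  have hgint : IntegrableOn g S := by
    refine Integrable.mono' (hgp.add (integrableOn_const (C := (1:ℝ)) (ne_of_lt ?_))) hgae ?_
    · simp [hSdef, Real.volume_Ioc]
    · rw [ae_restrict_iff' measurableSet_Ioc]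
      filter_upwards with t ht
      rw [Real.norm_of_nonneg (hg0 t ht)]
      rcases le_or_gt (g t) 1 with h1 | h1
      · have : (0:ℝ) ≤ g t ^ p := Real.rpow_nonneg (hg0 t ht) p
        simp only [Pi.add_apply]
        linarith
      · have h2 : g t ^ (1:ℝ) ≤ g t ^ p := Real.rpow_le_rpow_of_exponent_le h1.le hp.le
        rw [Real.rpow_one] at h2
        simp only [Pi.add_apply]
        linarith
  have hFc : ContinuousOn F (Icc 0 1) :=
    intervalIntegral.continuousOn_primitive ((integrableOn_Icc_iff_integrableOn_Ioc enorm_ne_top).2 hgint)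
  have hFnn : ∀ t ∈ Icc (0:ℝ) 1, 0 ≤ F t := by
    intro t ht
    exact setIntegral_nonneg measurableSet_Ioc (fun u hu => hg0 u ⟨hu.1, hu.2.trans ht.2⟩)
  have hF1 : F 1 = f := hf
  have hf0 : 0 ≤ f := hF1 ▸ hFnn 1 ⟨zero_le_one, le_rfl⟩
  -- g t ≤ H t
  have hgH : ∀ t ∈ S, g t ≤ H t := by
    intro t ht
    have ht0 : 0 < t := ht.1
    have h1 : t * g t ≤ F t := by
      have hconst : ∫ _ in Ioc (0:ℝ) t, g t = t * g t := by
        simp [Real.volume_Ioc, ENNReal.toReal_ofReal ht.1.le, ht.1.le]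
      rw [← hconst]
      refine setIntegral_mono_on (integrableOn_const (ne_of_lt ?_)) (hgint.mono_set ?_)
        measurableSet_Ioc ?_
      · rw [Real.volume_Ioc]; exact ENNReal.ofReal_lt_top
      · exact fun u hu => ⟨hu.1, hu.2.trans ht.2⟩
      · exact fun u hu => hmono ⟨hu.1, hu.2.trans ht.2⟩ ht hu.2
    rw [hHdef]
    simp only [one_div, ← div_eq_inv_mul]
    rw [le_div_iff₀ ht0]
    linarith [h1]
  have hHnn : ∀ t ∈ S, 0 ≤ H t := fun t ht =>
    mul_nonneg (one_div_nonneg.2 ht.1.le) (hFnn t ⟨ht.1.le, ht.2⟩)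
  have hHc : ContinuousOn H S := by
    apply ContinuousOn.mul
    · exact continuousOn_const.div continuousOn_id (fun x hx => ne_of_gt hx.1)
    · exact hFc.mono (fun x hx => ⟨hx.1.le, hx.2⟩)
  -- rpow conversion
  have hpow : ∀ r : ℝ, ∀ t ∈ S, H t ^ r = F t ^ r * t ^ (-r) := by
    intro r t ht
    rw [hHdef]
    simp only
    rw [Real.mul_rpow (one_div_nonneg.2 ht.1.le) (hFnn t ⟨ht.1.le, ht.2⟩), one_div,
      Real.inv_rpow ht.1.le, ← Real.rpow_neg ht.1.le]
    ring
  -- φ and its smallness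
  set φ : ℝ → ℝ := fun ε => F ε ^ p * ε ^ (1 - p) with hφdef
  set m : ℝ → ℝ := fun ε => ∫ u in Ioc (0:ℝ) ε, g u ^ p with hmdef
  set M : ℝ := m 1 with hMdef
  have hmnn : ∀ ε ∈ Icc (0:ℝ) 1, 0 ≤ m ε := fun ε hε =>
    setIntegral_nonneg measurableSet_Ioc
      (fun u hu => Real.rpow_nonneg (hg0 u ⟨hu.1, hu.2.trans hε.2⟩) p)
  have hφnn : ∀ ε ∈ S, 0 ≤ φ ε := fun ε hε =>
    mul_nonneg (Real.rpow_nonneg (hFnn ε ⟨hε.1.le, hε.2⟩) p) (Real.rpow_nonneg hε.1.le _)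
  have hφm : ∀ ε ∈ S, φ ε ≤ 2 ^ p * m ε := by
    intro ε hε
    have hε0 : 0 < ε := hε.1
    have hIocsub : Ioc (0:ℝ) ε ⊆ S := fun u hu => ⟨hu.1, hu.2.trans hε.2⟩
    have hFε0 : 0 ≤ F ε := hFnn ε ⟨hε0.le, hε.2⟩
    have claim1 : ∀ δ : ℝ, 0 < δ → F ε ≤ δ * ε + δ ^ (1-p) * m ε := by
      intro δ hδ
      have hpt : ∀ u ∈ Ioc (0:ℝ) ε, g u ≤ δ + δ ^ (1-p) * g u ^ p := by
        intro u hu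
        have hgu : 0 ≤ g u := hg0 u (hIocsub hu)
        rcases le_or_gt (g u) δ with h1 | h1
        · have : 0 ≤ δ ^ (1-p) * g u ^ p :=
            mul_nonneg (Real.rpow_nonneg hδ.le _) (Real.rpow_nonneg hgu _)
          linarith
        · have h2 : g u ^ (1-p) ≤ δ ^ (1-p) :=
            Real.rpow_le_rpow_of_nonpos hδ h1.le (by linarith)
          have hgu0 : 0 < g u := lt_trans hδ h1
          have h3 : g u = g u ^ (1-p) * g u ^ p := by
            rw [← Real.rpow_add hgu0]
            norm_num
          have h4 : g u ^ (1-p) * g u ^ p ≤ δ ^ (1-p) * g u ^ p :=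
            mul_le_mul_of_nonneg_right h2 (Real.rpow_nonneg hgu p)
          linarith
      have hint : IntegrableOn (fun u => δ + δ ^ (1-p) * g u ^ p) (Ioc (0:ℝ) ε) := by
        refine (integrableOn_const (ne_of_lt ?_)).add ((hgp.mono_set hIocsub).const_mul _)
        rw [Real.volume_Ioc]; exact ENNReal.ofReal_lt_top
      have h5 := setIntegral_mono_on (hgint.mono_set hIocsub) hint measurableSet_Ioc hpt
      rw [hFdef]
      simp only
      refine h5.trans (le_of_eq ?_)
      rw [integral_add (integrableOn_const (C := δ) (by rw [Real.volume_Ioc]; exact ENNReal.ofReal_ne_top)) ((hgp.mono_set hIocsub).const_mul _)]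
      rw [integral_const, integral_const_mul]
      simp [Real.volume_Ioc, ENNReal.toReal_ofReal hε0.le, hmdef, hε0.le]
      ring
    rcases eq_or_lt_of_le (hmnn ε ⟨hε0.le, hε.2⟩) with hm0 | hm0
    · -- m ε = 0 : F ε = 0
      have hFε : F ε = 0 := by
        by_contra hne
        have hFεpos : 0 < F ε := lt_of_le_of_ne hFε0 (Ne.symm hne)
        have hcl := claim1 (F ε / (2 * ε)) (div_pos hFεpos (by linarith))
        rw [← hm0, mul_zero, add_zero] at hcl
        have h9 : F ε / (2*ε) * ε = F ε / 2 := by field_simp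
        rw [h9] at hcl
        linarith
      rw [hφdef]
      simp only
      rw [hFε, Real.zero_rpow hp0.ne', ← hm0]
      simp
    · -- m ε > 0
      set δ := (m ε / ε) ^ (1/p : ℝ) with hδdef
      have hδpos : 0 < δ := Real.rpow_pos_of_pos (div_pos hm0 hε0) _
      have h6 := claim1 δ hδpos
      have hbound : F ε ≤ 2 * m ε ^ (1/p : ℝ) * ε ^ ((p-1)/p : ℝ) := by
        have hε1p : ε ^ ((p-1)/p : ℝ) * ε ^ (1/p : ℝ) = ε := by
          rw [← Real.rpow_add hε0, show (p-1)/p + 1/p = 1 by field_simp; ring, Real.rpow_one]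
        have e1 : δ * ε = m ε ^ (1/p : ℝ) * ε ^ ((p-1)/p : ℝ) := by
          rw [hδdef, Real.div_rpow hm0.le hε0.le, div_mul_eq_mul_div,
            div_eq_iff (ne_of_gt (Real.rpow_pos_of_pos hε0 _)), mul_assoc, hε1p]
        have b1 : δ ^ (1-p) = m ε ^ ((1-p)/p : ℝ) * ε ^ ((p-1)/p : ℝ) := by
          rw [hδdef, ← Real.rpow_mul (div_nonneg hm0.le hε0.le),
            show (1/p) * (1-p) = (1-p)/p by ring, Real.div_rpow hm0.le hε0.le,
            div_eq_mul_inv, ← Real.rpow_neg hε0.le, show -((1-p)/p) = (p-1)/p by ring]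
        have e2 : δ ^ (1-p) * m ε = m ε ^ (1/p : ℝ) * ε ^ ((p-1)/p : ℝ) := by
          rw [b1, show (1/p : ℝ) = (1-p)/p + 1 by field_simp; ring, Real.rpow_add hm0,
            Real.rpow_one]
          ring
        rw [e1, e2] at h6
        linarith
      have h7 : F ε ^ p ≤ (2 * m ε ^ (1/p:ℝ) * ε ^ ((p-1)/p : ℝ)) ^ p :=
        Real.rpow_le_rpow hFε0 hbound hp0.le
      have h8 : (2 * m ε ^ (1/p:ℝ) * ε ^ ((p-1)/p : ℝ)) ^ p = 2^p * m ε * ε ^ (p-1 : ℝ) := by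
        rw [Real.mul_rpow (by positivity) (Real.rpow_nonneg hε0.le _),
          Real.mul_rpow (by norm_num) (Real.rpow_nonneg hm0.le _),
          ← Real.rpow_mul hm0.le, ← Real.rpow_mul hε0.le]
        rw [show (1/p) * p = 1 by field_simp, show ((p-1)/p) * p = p - 1 by field_simp,
          Real.rpow_one]
      rw [hφdef]
      simp only
      calc F ε ^ p * ε ^ (1-p) ≤ (2^p * m ε * ε ^ (p-1:ℝ)) * ε ^ (1-p) := by
            rw [← h8]
            exact mul_le_mul_of_nonneg_right h7 (Real.rpow_nonneg hε0.le _)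
        _ = 2^p * m ε := by
            rw [mul_assoc, ← Real.rpow_add hε0]
            norm_num
  -- compact-interval integrability
  have hHIcc : ∀ ε : ℝ, 0 < ε → ContinuousOn H (Icc ε 1) := fun ε hε =>
    hHc.mono (fun x hx => ⟨lt_of_lt_of_le hε hx.1, hx.2⟩)
  have hIpIcc : ∀ ε : ℝ, 0 < ε → IntegrableOn (fun t => H t ^ p) (Icc ε 1) := fun ε hε =>
    ((hHIcc ε hε).rpow_const (fun x hx => Or.inr hp0.le)).integrableOn_compact isCompact_Icc
  have hIp1Icc : ∀ ε : ℝ, 0 < ε → IntegrableOn (fun t => H t ^ (p-1) * g t) (Icc ε 1) := by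
    intro ε hε
    exact IntegrableOn.continuousOn_mul
      ((hHIcc ε hε).rpow_const (fun x hx => Or.inr (by linarith)))
      (hgint.mono_set (fun x hx => ⟨lt_of_lt_of_le hε hx.1, hx.2⟩)) isCompact_Icc
  -- key inequality for each ε
  have hkey : ∀ ε ∈ S, f ^ p - φ ε ≤
      p * (∫ t in Ioc ε 1, H t ^ (p-1) * g t) - (p-1) * ∫ t in Ioc ε 1, H t ^ p := by
    intro ε hε
    have hε0 : 0 < ε := hε.1
    have hε1 : ε ≤ 1 := hε.2
    have hφc : ContinuousOn φ (Icc ε 1) := by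
      apply ContinuousOn.mul
      · exact (hFc.mono (Icc_subset_Icc hε0.le le_rfl)).rpow_const (fun x hx => Or.inr hp0.le)
      · exact continuousOn_id.rpow_const (fun x hx => Or.inl (ne_of_gt (lt_of_lt_of_le hε0 hx.1)))
    set φfun : ℝ → ℝ := fun y => p * (H y ^ (p-1) * g y) + (-(p-1)) * H y ^ p with hφfun
    have hφfunInt : IntegrableOn φfun (Icc ε 1) :=
      ((hIp1Icc ε hε0).const_mul p).add ((hIpIcc ε hε0).const_mul (-(p-1)))
    have hderiv : ∀ x ∈ Ioo ε 1, HasDerivWithinAt φ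
        ((p * F x ^ (p-1)) * sSup (g '' Ioo x 1) * x ^ (1-p) + F x ^ p * ((1-p) * x ^ (1-p-1)))
        (Ioi x) x := by
      intro x hx
      have hx0 : 0 < x := lt_trans hε0 hx.1
      have h1 : HasDerivWithinAt (fun y => F y ^ p)
          ((p * F x ^ (p-1)) * sSup (g '' Ioo x 1)) (Ioi x) x := by
        have hd := F_hasDeriv hmono hgint (t := x) ⟨hx0, hx.2⟩
        have hc := Real.hasDerivAt_rpow_const (x := F x) (p := p) (Or.inr hp.le)
        exact hc.comp_hasDerivWithinAt x hd
      have h2 : HasDerivWithinAt (fun y : ℝ => y ^ (1-p)) ((1-p) * x ^ (1-p-1)) (Ioi x) x :=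
        (Real.hasDerivAt_rpow_const (Or.inl hx0.ne')).hasDerivWithinAt
      exact h1.mul h2
    have hle : ∀ x ∈ Ioo ε 1, (p * F x ^ (p-1)) * sSup (g '' Ioo x 1) * x ^ (1-p)
        + F x ^ p * ((1-p) * x ^ (1-p-1)) ≤ φfun x := by
      intro x hx
      have hx0 : 0 < x := lt_trans hε0 hx.1
      have hxS : x ∈ S := ⟨hx0, hx.2.le⟩
      have hL : sSup (g '' Ioo x 1) ≤ g x := by
        apply csSup_le ((nonempty_Ioo.2 hx.2).image g)
        rintro y ⟨w, hw, rfl⟩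
        exact hmono hxS ⟨lt_trans hx0 hw.1, hw.2.le⟩ hw.1.le
      have e1 : H x ^ (p-1 : ℝ) = F x ^ (p-1) * x ^ (1-p) := by
        rw [hpow (p-1) x hxS, show -(p-1) = 1-p by ring]
      have e2 : H x ^ (p : ℝ) = F x ^ p * x ^ (-p) := hpow p x hxS
      have e3 : (1 - p - 1 : ℝ) = -p := by ring
      have hcoef : 0 ≤ p * F x ^ (p-1) * x ^ (1-p) :=
        mul_nonneg (mul_nonneg hp0.le (Real.rpow_nonneg (hFnn x ⟨hx0.le, hx.2.le⟩) _))
          (Real.rpow_nonneg hx0.le _)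
      have h4 : (p * F x ^ (p-1)) * sSup (g '' Ioo x 1) * x ^ (1-p)
          ≤ p * F x ^ (p-1) * x ^ (1-p) * g x := by
        calc (p * F x ^ (p-1)) * sSup (g '' Ioo x 1) * x ^ (1-p)
            = p * F x ^ (p-1) * x ^ (1-p) * sSup (g '' Ioo x 1) := by ring
          _ ≤ p * F x ^ (p-1) * x ^ (1-p) * g x := mul_le_mul_of_nonneg_left hL hcoef
      have e4 : φfun x = p * F x ^ (p-1) * x ^ (1-p) * g x + F x ^ p * ((1-p) * x ^ (-p)) := by
        rw [hφfun]
        simp only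
        rw [e1, e2]
        ring
      rw [e4, e3]
      linarith
    have hFTC := intervalIntegral.sub_le_integral_of_hasDeriv_right_of_le hε1 hφc hderiv
      hφfunInt hle
    have hφ1 : φ 1 = f ^ p := by
      rw [hφdef]
      simp only
      rw [hF1, Real.one_rpow, mul_one]
    rw [hφ1, intervalIntegral.integral_of_le hε1] at hFTC
    have hsplit : (∫ y in Ioc ε 1, φfun y) = p * (∫ t in Ioc ε 1, H t ^ (p-1) * g t)
        + (-(p-1)) * ∫ t in Ioc ε 1, H t ^ p := by
      rw [hφfun]
      rw [integral_add (((hIp1Icc ε hε0).mono_set Ioc_subset_Icc_self).const_mul p)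
        (((hIpIcc ε hε0).mono_set Ioc_subset_Icc_self).const_mul _),
        integral_const_mul, integral_const_mul]
    rw [hsplit] at hFTC
    linarith
  -- nonnegativity of g^p a.e.
  have hgpnn : 0 ≤ᵐ[volume.restrict S] (fun t => g t ^ p) := by
    filter_upwards [ae_restrict_mem measurableSet_Ioc] with t ht
    exact Real.rpow_nonneg (hg0 t ht) p
  have hMnn : 0 ≤ M := hmnn 1 ⟨zero_le_one, le_rfl⟩
  -- pointwise special Young with q := p, β := 1
  have hyoungP : ∀ t ∈ S, H t ^ (p-1) * g t ≤ (p-1)/(p*2) * H t ^ p + 2^(p-1 : ℝ)/p * g t ^ p := by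
    intro t ht
    have h := young_pt (p := p) (q := p) (β := 1) hp.le one_pos (hg0 t ht) (hgH t ht)
    have h2 : (1:ℝ) + 1 = 2 := by norm_num
    rw [h2, sub_self, Real.rpow_zero, one_mul] at h
    exact h
  -- uniform bound for ∫_{Ioc ε 1} H^p
  have hB'bound : ∀ ε ∈ S, (∫ t in Ioc ε 1, H t ^ p) ≤ 2*(2^(p-1 : ℝ)*M + 2^(p:ℝ)*M)/(p-1) := by
    intro ε hε
    have hsub : Ioc ε 1 ⊆ S := fun x hx => ⟨lt_trans hε.1 hx.1, hx.2⟩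
    have h1 : (∫ t in Ioc ε 1, H t ^ (p-1) * g t)
        ≤ ∫ t in Ioc ε 1, ((p-1)/(p*2) * H t ^ p + 2^(p-1:ℝ)/p * g t ^ p) :=
      setIntegral_mono_on ((hIp1Icc ε hε.1).mono_set Ioc_subset_Icc_self)
        ((((hIpIcc ε hε.1).mono_set Ioc_subset_Icc_self).const_mul _).add
          ((hgp.mono_set hsub).const_mul _))
        measurableSet_Ioc (fun t ht => hyoungP t (hsub ht))
    rw [integral_add (((hIpIcc ε hε.1).mono_set Ioc_subset_Icc_self).const_mul _)
      ((hgp.mono_set hsub).const_mul _), integral_const_mul, integral_const_mul] at h1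
    have h2 : (∫ t in Ioc ε 1, g t ^ p) ≤ M :=
      setIntegral_mono_set hgp hgpnn (HasSubset.Subset.eventuallyLE hsub)
    have h4 : m ε ≤ M := setIntegral_mono_set hgp hgpnn
      (HasSubset.Subset.eventuallyLE (fun x hx => ⟨hx.1, hx.2.trans hε.2⟩ : Ioc 0 ε ⊆ S))
    have h5 : 0 ≤ f ^ p := Real.rpow_nonneg hf0 p
    have h6 : (0:ℝ) < 2^(p:ℝ) := Real.rpow_pos_of_pos two_pos p
    have h7 : (0:ℝ) < 2^(p-1:ℝ) := Real.rpow_pos_of_pos two_pos (p-1)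
    have h8 := hkey ε hε
    have h9 := hφm ε hε
    have h10 := mul_le_mul_of_nonneg_left h1 hp0.le
    have e1 : p * ((p-1)/(p*2) * (∫ t in Ioc ε 1, H t ^ p) + 2^(p-1:ℝ)/p * ∫ t in Ioc ε 1, g t ^ p)
        = (p-1)/2 * (∫ t in Ioc ε 1, H t ^ p) + 2^(p-1:ℝ) * ∫ t in Ioc ε 1, g t ^ p := by
      field_simp
    rw [e1] at h10
    rw [le_div_iff₀ hp1]
    nlinarith [h2, h4, h5, h8, h9, h10, mul_le_mul_of_nonneg_left h2 h7.le,
      mul_le_mul_of_nonneg_left h4 h6.le]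
  -- the exhausting sequence
  set u : ℕ → ℝ := fun n => ((n:ℝ)+1)⁻¹ with hudef
  have hun0 : ∀ n, 0 < u n := by
    intro n
    rw [hudef]
    positivity
  have huS : ∀ n, u n ∈ S := by
    intro n
    refine ⟨hun0 n, ?_⟩
    rw [hudef]
    simp only
    rw [inv_le_one₀ (by positivity)]
    have : (0:ℝ) ≤ (n:ℝ) := Nat.cast_nonneg n
    linarith
  set sets : ℕ → Set ℝ := fun n => Ioc (u n) 1 with hsetsdef
  have hsetsS : ∀ n, sets n ⊆ S := fun n x hx => ⟨lt_trans (hun0 n) hx.1, hx.2⟩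
  have hsmono : Monotone sets := by
    intro a b hab
    apply Ioc_subset_Ioc_left
    rw [hudef]
    simp only
    have h1 : ((a:ℝ)+1) ≤ ((b:ℝ)+1) := by
      have : (a:ℝ) ≤ (b:ℝ) := Nat.cast_le.2 hab
      linarith
    exact inv_anti₀ (by positivity) h1
  have hsUnion : (⋃ n, sets n) = S := by
    ext x
    simp only [mem_iUnion, hsetsdef, mem_Ioc, hSdef]
    constructor
    · rintro ⟨n, h1, h2⟩
      exact ⟨lt_trans (hun0 n) h1, h2⟩
    · rintro ⟨h1, h2⟩
      obtain ⟨n, hn⟩ := exists_nat_one_div_lt h1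
      refine ⟨n, ?_, h2⟩
      rw [hudef]
      simpa [one_div] using hn
  -- integrability of H^p on S
  have hHpm : AEStronglyMeasurable (fun t => H t ^ p) (volume.restrict S) :=
    (hHc.rpow_const (fun x hx => Or.inr hp0.le)).aestronglyMeasurable measurableSet_Ioc
  have hHpnn : 0 ≤ᵐ[volume.restrict S] (fun t => H t ^ p) := by
    filter_upwards [ae_restrict_mem measurableSet_Ioc] with t ht
    exact Real.rpow_nonneg (hHnn t ht) p
  have hHpInt : IntegrableOn (fun t => H t ^ p) S := by
    refine ⟨hHpm, ?_⟩
    rw [hasFiniteIntegral_iff_ofReal hHpnn]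
    set fn : ℕ → ℝ → ENNReal := fun n => (sets n).indicator (fun t => ENNReal.ofReal (H t ^ p))
      with hfn
    have hfnm : ∀ n, AEMeasurable (fn n) (volume.restrict S) := fun n =>
      (hHpm.aemeasurable.ennreal_ofReal).indicator measurableSet_Ioc
    have hfnmono : ∀ᵐ x ∂(volume.restrict S), Monotone fun n => fn n x := by
      filter_upwards with x
      intro a b hab
      simp only [hfn]
      by_cases hxa : x ∈ sets a
      · rw [Set.indicator_of_mem hxa, Set.indicator_of_mem (hsmono hab hxa)]
      · rw [Set.indicator_of_notMem hxa]
        exact zero_le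
    have heq : (∫⁻ a, ENNReal.ofReal (H a ^ p) ∂(volume.restrict S))
        = ⨆ n, ∫⁻ a, fn n a ∂(volume.restrict S) := by
      rw [← lintegral_iSup' hfnm hfnmono]
      apply lintegral_congr_ae
      filter_upwards [ae_restrict_mem measurableSet_Ioc] with x hx
      have hxU : x ∈ ⋃ n, sets n := hsUnion.symm ▸ hx
      obtain ⟨n, hn⟩ := mem_iUnion.1 hxU
      apply le_antisymm
      · refine le_trans (le_of_eq ?_) (le_iSup _ n)
        simp only [hfn, Set.indicator_of_mem hn]
      · apply iSup_le
        intro k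
        simp only [hfn]
        by_cases hxa : x ∈ sets k
        · rw [Set.indicator_of_mem hxa]
        · rw [Set.indicator_of_notMem hxa]
          exact zero_le
    rw [heq]
    have hboundn : ∀ n, (∫⁻ a, fn n a ∂(volume.restrict S))
        ≤ ENNReal.ofReal (2*(2^(p-1:ℝ)*M + 2^(p:ℝ)*M)/(p-1)) := by
      intro n
      simp only [hfn]
      rw [lintegral_indicator measurableSet_Ioc, Measure.restrict_restrict measurableSet_Ioc]
      have hinter : sets n ∩ S = sets n := inter_eq_self_of_subset_left (hsetsS n)
      rw [hinter]
      rw [← ofReal_integral_eq_lintegral_ofReal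
        ((hIpIcc (u n) (hun0 n)).mono_set Ioc_subset_Icc_self) ?_]
      · exact ENNReal.ofReal_le_ofReal (hB'bound (u n) (huS n))
      · filter_upwards [ae_restrict_mem measurableSet_Ioc] with t ht
        exact Real.rpow_nonneg (hHnn t (hsetsS n ht)) p
    exact lt_of_le_of_lt (iSup_le hboundn) ENNReal.ofReal_lt_top
  -- domination of the other integrands
  have hP3 : ∀ t ∈ S, H t ^ (p-1) * g t ≤ H t ^ p := by
    intro t ht
    have h1 := mul_le_mul_of_nonneg_left (hgH t ht) (Real.rpow_nonneg (hHnn t ht) (p-1))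
    have h2 : H t ^ ((p-1)+1 : ℝ) = H t ^ (p-1 : ℝ) * H t := by
      rw [Real.rpow_add' (hHnn t ht) (by intro hh; exact hp0.ne' (by linarith)), Real.rpow_one]
    calc H t ^ (p-1 : ℝ) * g t ≤ H t ^ (p-1 : ℝ) * H t := h1
      _ = H t ^ ((p-1)+1 : ℝ) := h2.symm
      _ = H t ^ (p : ℝ) := by norm_num
  have hHp1gm : AEStronglyMeasurable (fun t => H t ^ (p-1) * g t) (volume.restrict S) :=
    ((hHc.rpow_const (fun x hx => Or.inr (by linarith))).aestronglyMeasurable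
      measurableSet_Ioc).mul hgae
  have hIp1S : IntegrableOn (fun t => H t ^ (p-1) * g t) S := by
    refine Integrable.mono' hHpInt hHp1gm ?_
    filter_upwards [ae_restrict_mem measurableSet_Ioc] with t ht
    rw [Real.norm_of_nonneg (mul_nonneg (Real.rpow_nonneg (hHnn t ht) _) (hg0 t ht))]
    exact hP3 t ht
  have hP2 : ∀ t ∈ S, H t ^ (p-q) * g t ^ q ≤ H t ^ p := by
    intro t ht
    have h1 : g t ^ q ≤ H t ^ q := Real.rpow_le_rpow (hg0 t ht) (hgH t ht) hq0.le
    have h2 := mul_le_mul_of_nonneg_left h1 (Real.rpow_nonneg (hHnn t ht) (p-q))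
    have h3 : H t ^ ((p-q)+q : ℝ) = H t ^ (p-q : ℝ) * H t ^ (q:ℝ) :=
      Real.rpow_add' (hHnn t ht) (by intro hh; exact hp0.ne' (by linarith))
    calc H t ^ (p-q : ℝ) * g t ^ q ≤ H t ^ (p-q : ℝ) * H t ^ (q : ℝ) := h2
      _ = H t ^ ((p-q)+q : ℝ) := h3.symm
      _ = H t ^ (p : ℝ) := by norm_num
  have hHpqm : AEStronglyMeasurable (fun t => H t ^ (p-q) * g t ^ q) (volume.restrict S) := by
    refine AEStronglyMeasurable.mul ?_ ?_
    · exact (hHc.rpow_const (fun x hx => Or.inr (by linarith))).aestronglyMeasurable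
        measurableSet_Ioc
    · exact ((Real.continuous_rpow_const hq0.le).measurable.comp_aemeasurable
        hgae.aemeasurable).aestronglyMeasurable
  have hIpqS : IntegrableOn (fun t => H t ^ (p-q) * g t ^ q) S := by
    refine Integrable.mono' hHpInt hHpqm ?_
    filter_upwards [ae_restrict_mem measurableSet_Ioc] with t ht
    rw [Real.norm_of_nonneg
      (mul_nonneg (Real.rpow_nonneg (hHnn t ht) _) (Real.rpow_nonneg (hg0 t ht) _))]
    exact hP2 t ht
  -- pass to the limit
  have hAtend : Tendsto (fun n => ∫ t in sets n, H t ^ (p-1) * g t) atTop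
      (𝓝 (∫ t in S, H t ^ (p-1) * g t)) := by
    have h := tendsto_setIntegral_of_monotone (fun n => measurableSet_Ioc) hsmono
      (by rw [hsUnion]; exact hIp1S)
    rwa [hsUnion] at h
  have hBtend : Tendsto (fun n => ∫ t in sets n, H t ^ p) atTop
      (𝓝 (∫ t in S, H t ^ p)) := by
    have h := tendsto_setIntegral_of_monotone (fun n => measurableSet_Ioc) hsmono
      (by rw [hsUnion]; exact hHpInt)
    rwa [hsUnion] at h
  have hgptend : Tendsto (fun n => ∫ t in sets n, g t ^ p) atTop (𝓝 M) := by
    have h := tendsto_setIntegral_of_monotone (fun n => measurableSet_Ioc) hsmono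
      (by rw [hsUnion]; exact hgp)
    rw [hsUnion] at h
    exact h
  have hφtend : Tendsto (fun n => φ (u n)) atTop (𝓝 0) := by
    have hmsplit : ∀ n, m (u n) = M - ∫ t in sets n, g t ^ p := by
      intro n
      have hun : Ioc (0:ℝ) (u n) ∪ Ioc (u n) 1 = Ioc 0 1 :=
        Ioc_union_Ioc_eq_Ioc (hun0 n).le (huS n).2
      have hdis : Disjoint (Ioc (0:ℝ) (u n)) (Ioc (u n) 1) := by
        simp [Set.disjoint_left]
        intro x h1 h2
        exact fun h => absurd h (not_lt.2 h2)
      have hMsum : M = m (u n) + ∫ t in sets n, g t ^ p := by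
        rw [hMdef, hmdef]
        simp only
        rw [show Ioc (0:ℝ) 1 = Ioc 0 (u n) ∪ Ioc (u n) 1 from hun.symm,
          setIntegral_union hdis measurableSet_Ioc
            (hgp.mono_set (fun x hx => ⟨hx.1, hx.2.trans (huS n).2⟩))
            (hgp.mono_set (hsetsS n))]
      linarith
    have h2 : Tendsto (fun n => 2^(p:ℝ) * m (u n)) atTop (𝓝 0) := by
      have h3 : (fun n => 2^(p:ℝ) * m (u n)) = fun n => 2^(p:ℝ) * (M - ∫ t in sets n, g t ^ p) := by
        funext n
        rw [hmsplit n]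
      rw [h3]
      have h4 : Tendsto (fun n => M - ∫ t in sets n, g t ^ p) atTop (𝓝 0) := by
        have := (tendsto_const_nhds (x := M) (f := (atTop : Filter ℕ))).sub hgptend
        simpa using this
      have := h4.const_mul (2^(p:ℝ))
      simpa using this
    exact squeeze_zero (fun n => hφnn (u n) (huS n)) (fun n => hφm (u n) (huS n)) h2
  have hmain : f ^ p ≤ p * (∫ t in S, H t ^ (p-1) * g t) - (p-1) * ∫ t in S, H t ^ p := by
    have hT1 : Tendsto (fun n => f ^ p - φ (u n)) atTop (𝓝 (f ^ p)) := by
      have := (tendsto_const_nhds (x := f^p) (f := (atTop : Filter ℕ))).sub hφtend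
      simpa using this
    have hT2 : Tendsto (fun n => p * (∫ t in Ioc (u n) 1, H t ^ (p-1) * g t)
        - (p-1) * ∫ t in Ioc (u n) 1, H t ^ p) atTop
        (𝓝 (p * (∫ t in S, H t ^ (p-1) * g t) - (p-1) * ∫ t in S, H t ^ p)) :=
      (hAtend.const_mul p).sub (hBtend.const_mul (p-1))
    exact le_of_tendsto_of_tendsto' hT1 hT2 (fun n => hkey (u n) (huS n))
  -- integrate the pointwise Young inequality
  have hCineq : (∫ t in S, H t ^ (p-1) * g t)
      ≤ (q-1)/(q*(β+1)) * (∫ t in S, H t ^ p)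
        + (β+1)^(q-1 : ℝ)/q * ∫ t in S, H t ^ (p-q) * g t ^ q := by
    have h1 : (∫ t in S, H t ^ (p-1) * g t)
        ≤ ∫ t in S, ((q-1)/(q*(β+1)) * H t ^ p + (β+1)^(q-1:ℝ)/q * (H t ^ (p-q) * g t ^ q)) :=
      setIntegral_mono_on hIp1S ((hHpInt.const_mul _).add (hIpqS.const_mul _))
        measurableSet_Ioc (fun t ht => young_pt hq1 hβ (hg0 t ht) (hgH t ht))
    rwa [integral_add (hHpInt.const_mul _) (hIpqS.const_mul _), integral_const_mul,
      integral_const_mul] at h1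
  -- final algebra
  have hD : (0:ℝ) < (p-1)*q*β + (p-q) := by nlinarith [mul_pos (mul_pos hp1 hq0) hβ]
  have hqβ : (0:ℝ) < q*(β+1) := by nlinarith
  have hE : (β+1) ^ (q-1 : ℝ) * (β+1) = (β+1) ^ (q : ℝ) := by
    rw [← Real.rpow_add_one (by positivity : (β+1:ℝ) ≠ 0) (q-1)]
    norm_num
  have hcomb : ((p-1)*q*β + (p-q)) * (∫ t in S, H t ^ p)
      ≤ -(q*(β+1)) * f^p + p * (β+1)^(q:ℝ) * ∫ t in S, H t ^ (p-q) * g t ^ q := by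
    have h3 := mul_le_mul_of_nonneg_left hCineq (by positivity : (0:ℝ) ≤ p * (q*(β+1)))
    have e3 : p * (q*(β+1)) * ((q-1)/(q*(β+1)) * (∫ t in S, H t ^ p)
        + (β+1)^(q-1:ℝ)/q * ∫ t in S, H t ^ (p-q) * g t ^ q)
        = p*(q-1)*(∫ t in S, H t ^ p)
          + p*((β+1)^(q:ℝ))*(∫ t in S, H t ^ (p-q) * g t ^ q) := by
      rw [← hE]
      field_simp
    rw [e3] at h3
    nlinarith [mul_le_mul_of_nonneg_left hmain hqβ.le, h3]
  have hfinal : (∫ t in S, H t ^ p)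
      ≤ -(q * (β + 1) / ((p - 1) * q * β + (p - q))) * f ^ p
        + (p * (β + 1) ^ (q:ℝ) / ((p - 1) * q * β + (p - q))) *
          ∫ t in S, H t ^ (p-q) * g t ^ q := by
    have h1 : (∫ t in S, H t ^ p)
        ≤ (-(q*(β+1)) * f^p + p * (β+1)^(q:ℝ) * ∫ t in S, H t ^ (p-q) * g t ^ q)
          / ((p-1)*q*β + (p-q)) := by
      rw [le_div_iff₀ hD]
      linarith [hcomb]
    refine h1.trans (le_of_eq ?_)
    ring
  exact hfinal
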